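/- Let X be a set of ordinals and η the least ordinal with X ⊆ η. Then X is a closed subset of η (with η carrying the order topology) if and only if X, with the subspace topology induced from η, is order-homeomorphic to its order type (i.e., the order isomorphism from the order type of X to X is a homeomorphism). -/

import Mathlib

open Set Ordinal
open scoped Cardinal

/-- Natural (Hessenberg) addition of ordinals (removed from Mathlib; old definition restored). -/
noncomputable def Ordinal.nadd (a b : Ordinal.{0}) : Ordinal.{0} :=
  max (⨆ x : Iio a, Order.succ (Ordinal.nadd x.1 b)) (⨆ x : Iio b, Order.succ (Ordinal.nadd a x.1))
termination_by (a, b)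
decreasing_by
  · exact Prod.Lex.left _ _ x.2
  · exact Prod.Lex.right _ x.2

infixl:65 " ♯ " => Ordinal.nadd

noncomputable section

/-- Derived set (non-isolated points) of a set of ordinals, as a subspace. -/
def deriv' (s : Set Ordinal.{0}) : Set Ordinal.{0} := {x ∈ s | x ∈ closure (s \ {x})}

/-- Iterated Cantor–Bendixson derivative. -/
def iterDeriv (s : Set Ordinal.{0}) (o : Ordinal.{0}) : Set Ordinal.{0} :=
  Ordinal.limitRecOn o s (fun _ ih => deriv' ih) (fun o _ ih => ⋂ (p : Ordinal.{0}) (h : p < o), ih p h)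

/-- `s` contains a homeomorphic copy of the ordinal `α` (with its order topology). -/
def HomeoCopy (α : Ordinal.{0}) (s : Set Ordinal.{0}) : Prop :=
  ∃ t : Set Ordinal, t ⊆ s ∧ Nonempty ((Iio α : Set Ordinal.{0}) ≃ₜ t)

/-- Two ordinals are biembeddable: each is homeomorphic to a subspace of the other. -/
def Biembed (α β : Ordinal.{0}) : Prop := HomeoCopy α (Iio β) ∧ HomeoCopy β (Iio α)

/-- Two sets of ordinals are order-homeomorphic: there is an order-preserving homeomorphism. -/
def OrderHomeo (X Y : Set Ordinal.{0}) : Prop :=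
  ∃ e : X ≃ₜ Y, ∀ a b : X, a ≤ b ↔ e a ≤ e b

/-- An ordinal is order-reinforcing. -/
def OrderReinforcing (α : Ordinal.{0}) : Prop :=
  ∀ X : Set Ordinal, Nonempty ((Iio α : Set Ordinal.{0}) ≃ₜ X) → ∃ Y ⊆ X, OrderHomeo (Iio α) Y

/-- The Cantor–Bendixson rank of an ordinal: the least exponent in its Cantor normal form. -/
def CB (x : Ordinal.{0}) : Ordinal := if x = 0 then 0 else sSup {γ | (ω : Ordinal.{0}) ^ γ ∣ x}

/-- The natural (Hessenberg) sum of a finite family of ordinals. -/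
def natSumFam {k : ℕ} (α : Fin k → Ordinal.{0}) : Ordinal := (List.ofFn α).foldr (· ♯ ·) 0

/-- The Milner–Rado sum of a finite family of ordinals. -/
def mrSumFam {k : ℕ} (α : Fin k → Ordinal.{0}) : Ordinal :=
  sInf {δ | ∀ β : Fin k → Ordinal, (∀ i, β i < α i) → δ ≠ natSumFam β}

/-- The topological pigeonhole relation `β → (top α i)¹` for finitely many colours. -/
def TopPH {k : ℕ} (β : Ordinal.{0}) (α : Fin k → Ordinal.{0}) : Prop :=
  ∀ c : Ordinal → Fin k, ∃ i, HomeoCopy (α i) (Iio β ∩ c ⁻¹' {i})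

/-- The topological pigeonhole relation with an arbitrary index type of colours. -/
def TopPHFam {ι : Type*} (β : Ordinal.{0}) (α : ι → Ordinal.{0}) : Prop :=
  ∀ c : Ordinal → ι, ∃ i, HomeoCopy (α i) (Iio β ∩ c ⁻¹' {i})

/-- `ω̄[γ, m]`: `ω ^ γ * m + 1` if `γ > 0`, and `m` if `γ = 0`. -/
def obar (γ : Ordinal.{0}) (m : ℕ) : Ordinal := if γ = 0 then (m : Ordinal.{0}) else ω ^ γ * m + 1

/-- `C` is closed and unbounded in `o`. -/
def IsClubIn (C : Set Ordinal.{0}) (o : Ordinal.{0}) : Prop :=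
  C ⊆ Iio o ∧ (∀ x < o, ∃ y ∈ C, x ≤ y) ∧
    ∀ x < o, x ≠ 0 → (∀ y < x, ∃ z ∈ C, y < z ∧ z < x) → x ∈ C

/-- `S` is stationary in `o`: it meets every club subset of `o`. -/
def StationaryIn (S : Set Ordinal.{0}) (o : Ordinal.{0}) : Prop :=
  ∀ C, IsClubIn C o → (S ∩ C).Nonempty

private lemma aux_closure_mem {X : Set Ordinal.{0}} {η : Ordinal.{0}}
    (hX : ∀ x ∈ X, x < η)
    (hc : IsClosed {x : (Iio η : Set Ordinal.{0}) | (x : Ordinal.{0}) ∈ X})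
    {y : Ordinal.{0}} (hy : y < η) (hcl : y ∈ closure X) : y ∈ X := by
  have himg : (Subtype.val '' {x : (Iio η : Set Ordinal.{0}) | (x : Ordinal.{0}) ∈ X}) = X := by
    ext z
    constructor
    · rintro ⟨w, hw, rfl⟩; exact hw
    · intro hz; exact ⟨⟨z, hX z hz⟩, hz, rfl⟩
  have hmem : (⟨y, hy⟩ : (Iio η : Set Ordinal.{0})) ∈
      closure {x : (Iio η : Set Ordinal.{0}) | (x : Ordinal.{0}) ∈ X} := by
    rw [closure_subtype, himg]; exact hcl
  rw [hc.closure_eq] at hmem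
  exact hmem

private lemma aux_sSup_Iio {a : Ordinal.{0}} (h0 : a ≠ 0)
    (hs : ∀ b, a ≠ Order.succ b) : sSup (Iio a) = a := by
  apply le_antisymm
  · exact csSup_le ⟨0, pos_iff_ne_zero.2 h0⟩ fun b hb => hb.le
  · refine le_of_forall_lt fun c hc => ?_
    have h1 : Order.succ c ≤ a := Order.succ_le_of_lt hc
    have h2 : Order.succ c < a := h1.lt_of_ne fun h => hs c h.symm
    exact lt_of_lt_of_le (Order.lt_succ c) (le_csSup ⟨a, fun z hz => hz.le⟩ h2)

private lemma aux_mem_closure_Iio {a : Ordinal.{0}} (h0 : a ≠ 0)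
    (hs : ∀ b, a ≠ Order.succ b) : a ∈ closure (Iio a) := by
  have := csSup_mem_closure (s := Iio a) ⟨0, pos_iff_ne_zero.2 h0⟩
    ⟨a, fun z hz => hz.le⟩
  rwa [aux_sSup_Iio h0 hs] at this

private lemma aux_orderTopology {X : Set Ordinal.{0}} {η : Ordinal.{0}}
    (hX : ∀ x ∈ X, x < η)
    (hc : IsClosed {x : (Iio η : Set Ordinal.{0}) | (x : Ordinal.{0}) ∈ X}) :
    OrderTopology X := by
  constructor
  have h1 : (instTopologicalSpaceSubtype : TopologicalSpace X) ≤ Preorder.topology X :=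
    induced_topology_le_preorder fun {x y} => Iff.rfl
  have h2 : Preorder.topology X ≤ (instTopologicalSpaceSubtype : TopologicalSpace X) := by
    have heq : (instTopologicalSpaceSubtype : TopologicalSpace X) =
        TopologicalSpace.generateFrom
          ((Set.preimage (Subtype.val : X → Ordinal)) ''
            {s : Set Ordinal | ∃ a, s = Ioi a ∨ s = Iio a}) := by
      rw [show (instTopologicalSpaceSubtype : TopologicalSpace X) =
          TopologicalSpace.induced Subtype.val
            (TopologicalSpace.generateFrom {s : Set Ordinal | ∃ a, s = Ioi a ∨ s = Iio a}) from rfl]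
      exact induced_generateFrom_eq
    rw [heq]
    refine le_generateFrom ?_
    rintro s ⟨t, ⟨b, rfl | rfl⟩, rfl⟩
    · -- Ioi b
      rcases eq_empty_or_nonempty {z | z ∈ X ∧ z ≤ b} with hD | hD
      · have huniv : (Subtype.val : X → Ordinal) ⁻¹' Ioi b = Set.univ := by
          ext z
          simp only [mem_preimage, mem_Ioi, Set.mem_univ, iff_true]
          by_contra hzb
          have : (z : Ordinal) ∈ {z | z ∈ X ∧ z ≤ b} := ⟨z.2, not_lt.1 hzb⟩
          rw [hD] at this
          exact this
        rw [huniv]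
        exact TopologicalSpace.GenerateOpen.univ
      · set m : Ordinal := sSup {z | z ∈ X ∧ z ≤ b} with hm
        have hbdd : BddAbove {z | z ∈ X ∧ z ≤ b} := ⟨b, fun z hz => hz.2⟩
        have hmb : m ≤ b := csSup_le hD fun z hz => hz.2
        rcases lt_or_ge m η with hmη | hmη
        · have hmX : m ∈ X := by
            refine aux_closure_mem hX hc hmη ?_
            exact closure_mono (fun z hz => hz.1) (csSup_mem_closure hD hbdd)
          have hset : (Subtype.val : X → Ordinal) ⁻¹' Ioi b = Ioi (⟨m, hmX⟩ : X) := by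
            ext z
            simp only [mem_preimage, mem_Ioi]
            constructor
            · intro hbz
              exact Subtype.mk_lt_mk.2 (lt_of_le_of_lt hmb hbz)
            · intro hmz
              by_contra hzb
              exact absurd (le_csSup hbdd ⟨z.2, not_lt.1 hzb⟩) (not_le.2 hmz)
          rw [hset]
          exact TopologicalSpace.GenerateOpen.basic _ ⟨⟨m, hmX⟩, Or.inl rfl⟩
        · have hempty : (Subtype.val : X → Ordinal) ⁻¹' Ioi b = (∅ : Set X) := by
            ext z
            simp only [mem_preimage, mem_Ioi, mem_empty_iff_false, iff_false, not_lt]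
            exact le_trans (le_trans (hX z.1 z.2).le hmη) hmb
          rw [hempty, ← sUnion_empty]
          exact TopologicalSpace.GenerateOpen.sUnion ∅ fun s hs => absurd hs (notMem_empty s)
    · -- Iio b
      rcases eq_empty_or_nonempty {z : X | b ≤ (z : Ordinal)} with hD | hD
      · have huniv : (Subtype.val : X → Ordinal) ⁻¹' Iio b = Set.univ := by
          ext z
          simp only [mem_preimage, mem_Iio, Set.mem_univ, iff_true]
          by_contra hzb
          have : z ∈ {z : X | b ≤ (z : Ordinal)} := not_lt.1 hzb
          rw [hD] at this
          exact this
        rw [huniv]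
        exact TopologicalSpace.GenerateOpen.univ
      · obtain ⟨y, hy, hymin⟩ := wellFounded_lt.has_min {z : X | b ≤ (z : Ordinal)} hD
        have hset : (Subtype.val : X → Ordinal) ⁻¹' Iio b = Iio y := by
          ext z
          simp only [mem_preimage, mem_Iio]
          constructor
          · intro hzb
            exact lt_of_lt_of_le (Subtype.mk_lt_mk.2 (lt_of_lt_of_le hzb hy) : z < y) le_rfl
          · intro hzy
            by_contra hzb
            exact hymin z (not_lt.1 hzb) hzy
        rw [hset]
        exact TopologicalSpace.GenerateOpen.basic _ ⟨y, Or.inr rfl⟩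
  exact le_antisymm h1 h2

private def xIso (α : Type) [LinearOrder α] [WellFoundedLT α] :
    (Iio (Ordinal.type (α := α) (· < ·)) : Set Ordinal.{0}) ≃o α where
  toFun x := Ordinal.enum (α := α) (· < ·) ⟨x.1, x.2⟩
  invFun a := ⟨Ordinal.typein (α := α) (· < ·) a, Ordinal.typein_lt_type _ a⟩
  left_inv x := Subtype.ext (Ordinal.typein_enum _ _)
  right_inv a := Ordinal.enum_typein _ _
  map_rel_iff' := @fun a b => by
    rw [← Ordinal.enum_le_enum (α := α) (· < ·), not_lt]
    exact Iff.rfl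

private def yIso (X : Set Ordinal.{0}) (η : Ordinal.{0}) (hX : ∀ x ∈ X, x < η) :
    {t : η.ToType | ((((ToType.mk (o := η))).symm t : (Iio η : Set Ordinal.{0})) : Ordinal.{0}) ∈ X}
      ≃o X where
  toFun t := ⟨(((ToType.mk (o := η))).symm t.1 : (Iio η : Set Ordinal.{0})), t.2⟩
  invFun x := ⟨(ToType.mk (o := η)) ⟨x.1, hX x.1 x.2⟩, by
    simp only [mem_setOf_eq, OrderIso.symm_apply_apply]; exact x.2⟩
  left_inv t := by
    apply Subtype.ext
    apply ((ToType.mk (o := η))).symm.injective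
    rw [OrderIso.symm_apply_apply]
  right_inv x := Subtype.ext (by
    simp only [OrderIso.symm_apply_apply])
  map_rel_iff' := @fun a b => by
    constructor
    · intro h
      have h2 : ((ToType.mk (o := η))).symm a.1 ≤ ((ToType.mk (o := η))).symm b.1 := h
      exact ((ToType.mk (o := η))).symm.le_iff_le.1 h2
    · intro h
      exact Subtype.coe_le_coe.2 (((ToType.mk (o := η))).symm.le_iff_le.2 h)

/-- A set of ordinals is closed in the least ordinal containing it iff it is
order-homeomorphic to its order type. -/
theorem isClosed_iff_orderHomeo_type (X : Set Ordinal.{0}) (η : Ordinal.{0})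
    (hη : IsLeast {e : Ordinal.{0} | ∀ x ∈ X, x < e} η) :
    IsClosed {x : (Iio η : Set Ordinal.{0}) | (x : Ordinal.{0}) ∈ X} ↔
      ∃ o : Ordinal.{0}, OrderHomeo (Iio o) X := by
  have hX : ∀ x ∈ X, x < η := hη.1
  constructor
  · intro hc
    haveI hOT : OrderTopology ↥X := aux_orderTopology hX hc
    set Y := {t : η.ToType |
      ((((ToType.mk (o := η))).symm t : (Iio η : Set Ordinal.{0})) : Ordinal.{0}) ∈ X} with hYdef
    set o := Ordinal.type (α := ↥Y) (· < ·) with ho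
    haveI : OrdConnected (Iio o : Set Ordinal.{0}) := ordConnected_Iio
    have g : (Iio o : Set Ordinal.{0}) ≃o X := (xIso ↥Y).trans (yIso X η hX)
    exact ⟨o, g.toHomeomorph, fun a b => g.le_iff_le.symm⟩
  · rintro ⟨o, e, he⟩
    refine isClosed_of_closure_subset ?_
    intro x hxcl
    by_contra hxS
    have himg : (Subtype.val '' {x : (Iio η : Set Ordinal.{0}) | (x : Ordinal.{0}) ∈ X}) = X := by
      ext z
      constructor
      · rintro ⟨w, hw, rfl⟩; exact hw
      · intro hz; exact ⟨⟨z, hX z hz⟩, hz, rfl⟩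
    have hxclX : (x : Ordinal) ∈ closure X := himg ▸ (closure_subtype.1 hxcl)
    -- there is an element of X above x
    have hB : ∃ b ∈ X, (x : Ordinal) < b := by
      by_contra hb
      push_neg at hb
      have hall : ∀ z ∈ X, z < (x : Ordinal) :=
        fun z hz => (hb z hz).lt_of_ne fun h => hxS (show (x : Ordinal) ∈ X from h ▸ hz)
      exact absurd (hη.2 hall) (not_le.2 x.2)
    -- x is in the closure of A = X ∩ Iic x
    set A : Set Ordinal.{0} := X ∩ Iic (x : Ordinal) with hAdef
    have hsub : X ⊆ A ∪ Ici (Order.succ (x : Ordinal)) := by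
      intro z hz
      rcases le_or_gt z (x : Ordinal) with h | h
      · exact Or.inl ⟨hz, h⟩
      · exact Or.inr (Order.succ_le_of_lt h)
    have hclA : (x : Ordinal) ∈ closure A := by
      have h1 := closure_mono hsub hxclX
      rw [closure_union] at h1
      rcases h1 with h | h
      · exact h
      · rw [isClosed_Ici.closure_eq] at h
        exact absurd (mem_Ici.1 h) (not_le.2 (Order.lt_succ _))
    have hAne : A.Nonempty := by
      rcases A.eq_empty_or_nonempty with h | h
      · rw [h, closure_empty] at hclA; exact hclA.elim
      · exact h
    -- the preimage of the lower part of X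
    set S' : Set (Iio o : Set Ordinal.{0}) :=
      e ⁻¹' {z : X | (z : Ordinal) ≤ (x : Ordinal)} with hS'def
    have hS'closed : IsClosed S' :=
      ((isClosed_Iic.preimage continuous_subtype_val).preimage e.continuous)
    set T : Set Ordinal.{0} := Subtype.val '' S' with hTdef
    have hTdc : ∀ ⦃y t : Ordinal.{0}⦄, t ∈ T → y ≤ t → y ∈ T := by
      rintro y t ⟨s, hs, rfl⟩ hyt
      have hy : y < o := lt_of_le_of_lt hyt s.2
      refine ⟨⟨y, hy⟩, ?_, rfl⟩
      have h1 : (⟨y, hy⟩ : (Iio o : Set Ordinal.{0})) ≤ s := hyt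
      have h2 : e ⟨y, hy⟩ ≤ e s := (he _ _).1 h1
      exact le_trans (Subtype.coe_le_coe.2 h2) hs
    -- T is nonempty
    obtain ⟨z0, hz0⟩ := hAne
    have hT0 : ((e.symm ⟨z0, hz0.1⟩ : (Iio o : Set Ordinal.{0})) : Ordinal) ∈ T := by
      refine ⟨e.symm ⟨z0, hz0.1⟩, ?_, rfl⟩
      show ((e (e.symm ⟨z0, hz0.1⟩) : X) : Ordinal) ≤ (x : Ordinal)
      rw [e.apply_symm_apply]
      exact hz0.2
    -- the complement of T in Iio o is nonempty
    obtain ⟨b, hbX, hxb⟩ := hB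
    have hc0 : ((e.symm ⟨b, hbX⟩ : (Iio o : Set Ordinal.{0})) : Ordinal) ∉ T := by
      rintro ⟨s, hs, hval⟩
      have hse : s = e.symm ⟨b, hbX⟩ := Subtype.ext hval
      rw [hse] at hs
      have : ((e (e.symm ⟨b, hbX⟩) : X) : Ordinal) ≤ (x : Ordinal) := hs
      rw [e.apply_symm_apply] at this
      exact absurd this (not_le.2 hxb)
    have hne' : {c : Ordinal.{0} | c ∉ T}.Nonempty := ⟨_, hc0⟩
    set a := sInf {c : Ordinal.{0} | c ∉ T} with ha
    have haT : a ∉ T := csInf_mem hne'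
    have hc0' : ((e.symm ⟨b, hbX⟩ : (Iio o : Set Ordinal.{0})) : Ordinal) ∈
        {c : Ordinal.{0} | c ∉ T} := hc0
    have hao : a < o :=
      lt_of_le_of_lt (csInf_le (OrderBot.bddBelow _) hc0') (e.symm ⟨b, hbX⟩).2
    have hIioT : ∀ y < a, y ∈ T := by
      intro y hy
      by_contra hyT
      have hyT' : y ∈ {c : Ordinal.{0} | c ∉ T} := hyT
      exact absurd (csInf_le (OrderBot.bddBelow _) hyT') (not_le.2 hy)
    have hTIio : T ⊆ Iio a := by
      intro t ht
      by_contra hta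
      exact haT (hTdc ht (not_lt.1 hta))
    have hTeq : T = Iio a := Subset.antisymm hTIio fun y hy => hIioT y hy
    have ha0 : a ≠ 0 := by
      intro h0
      rw [h0] at hTeq
      rw [hTeq] at hT0
      exact absurd hT0 (by simp)
    have hasucc : ∀ b', a ≠ Order.succ b' := by
      intro b' hb'
      have hb'T : b' ∈ T := hIioT b' (hb' ▸ Order.lt_succ b')
      obtain ⟨s, hsS, hsval⟩ := hb'T
      have hAm : A ⊆ Iic ((e s : X) : Ordinal) := by
        rintro z hz
        have hszT : ((e.symm ⟨z, hz.1⟩ : (Iio o : Set Ordinal.{0})) : Ordinal) ∈ T := by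
          refine ⟨e.symm ⟨z, hz.1⟩, ?_, rfl⟩
          show ((e (e.symm ⟨z, hz.1⟩) : X) : Ordinal) ≤ (x : Ordinal)
          rw [e.apply_symm_apply]
          exact hz.2
        have h1 : ((e.symm ⟨z, hz.1⟩ : (Iio o : Set Ordinal.{0})) : Ordinal) < a := by
          rw [hTeq] at hszT; exact hszT
        have h2 : ((e.symm ⟨z, hz.1⟩ : (Iio o : Set Ordinal.{0})) : Ordinal) ≤ b' := by
          rw [hb'] at h1
          exact Order.le_of_lt_succ h1
        have h3 : (e.symm ⟨z, hz.1⟩ : (Iio o : Set Ordinal.{0})) ≤ s := by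
          rw [← hsval] at h2
          exact h2
        have h4 := (he _ _).1 h3
        rw [e.apply_symm_apply] at h4
        exact Subtype.coe_le_coe.2 h4
      have hxm : (x : Ordinal) ≤ ((e s : X) : Ordinal) :=
        closure_minimal hAm isClosed_Iic hclA
      have hmx : ((e s : X) : Ordinal) ≤ (x : Ordinal) := hsS
      have hEq : ((e s : X) : Ordinal) = (x : Ordinal) := le_antisymm hmx hxm
      exact hxS (show (x : Ordinal) ∈ X from hEq ▸ (e s).2)
    have hacl : a ∈ closure T := by
      rw [hTeq]
      exact aux_mem_closure_Iio ha0 hasucc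
    have hmemcl : (⟨a, hao⟩ : (Iio o : Set Ordinal.{0})) ∈ closure S' := by
      rw [closure_subtype]
      exact hacl
    rw [hS'closed.closure_eq] at hmemcl
    have haT2 : a ∈ T := ⟨⟨a, hao⟩, hmemcl, rfl⟩
    rw [hTeq] at haT2
    exact lt_irrefl a haT2

end
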